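/- Assume there are at least two distinct agents. For every epistemic model M=(W,∼,V) with equivalence relations ∼_a, every state s ∈ W, and every word α: s,ε ⊨ ⟨α⟩ empty if and only if α = ε, where empty := ⋀_{a∈A}[a]⊥ ∧ ⋀_{a,b∈A} K_a[b]⊥. -/

import Mathlib

/-- Words over the alphabet `A ⊕ F` (agents and formulas). -/
abbrev Word (A F : Type) := List (A ⊕ F)

/-- The agent occurrences of a word, in order. -/
def wAgents {A F : Type} (w : Word A F) : List A := w.filterMap Sum.getLeft?

/-- The formula occurrences of a word, in order (the projection `α↾_!`). -/
def wForms {A F : Type} (w : Word A F) : List F := w.filterMap Sum.getRight?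

/-- `|α|_a`: the number of occurrences of agent `a` in `α`. -/
def wcountA {A F : Type} [DecidableEq A] (w : Word A F) (a : A) : ℕ := (wAgents w).count a

/-- `|α|_!`: the number of formula occurrences in `α`. -/
def wcountF {A F : Type} (w : Word A F) : ℕ := (wForms w).length

/-- A history: in every prefix, every agent has received at most as many
messages as have been sent. -/
def IsHistory {A F : Type} [DecidableEq A] (w : Word A F) : Prop :=
  ∀ β : Word A F, β <+: w → ∀ a : A, wcountA β a ≤ wcountF β

/-- `α↾_{!a}`: the formulas of `α` that agent `a` has read, i.e. the restriction
of `α↾_!` to its first `|α|_a` elements. -/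
def wRead {A F : Type} [DecidableEq A] (w : Word A F) (a : A) : List F :=
  (wForms w).take (wcountA w a)

/-- The view relation `α ▷_a β`: `β` is a history with `β↾_! = β↾_{!a} = α↾_{!a}`. -/
def View {A F : Type} [DecidableEq A] (a : A) (α β : Word A F) : Prop :=
  IsHistory β ∧ wForms β = wRead β a ∧ wRead β a = wRead α a

/-- Formulas of the language `L_aa`. -/
inductive Form (P A : Type) : Type where
  | atom : P → Form P A
  | top  : Form P A
  | neg  : Form P A → Form P A
  | or   : Form P A → Form P A → Form P A
  | kdia : A → Form P A → Form P A            -- `K̂_a φ`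
  | ann  : Form P A → Form P A → Form P A     -- `⟨ψ⟩φ`
  | recv : A → Form P A → Form P A            -- `⟨a⟩φ`

/-- Modal depth `deg`. -/
def deg {P A : Type} : Form P A → ℕ
  | .atom _ => 0
  | .top => 0
  | .neg φ => deg φ
  | .or φ ψ => max (deg φ) (deg ψ)
  | .kdia _ φ => deg φ + 1
  | .ann ψ φ => deg ψ + deg φ
  | .recv _ φ => deg φ

/-- Size `‖φ‖` of a formula. -/
def fsize {P A : Type} : Form P A → ℕ
  | .atom _ => 2
  | .top => 1
  | .neg φ => fsize φ + 1
  | .or φ ψ => fsize φ + fsize ψ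
  | .kdia _ φ => fsize φ + 1
  | .ann ψ φ => 2 * fsize ψ + fsize φ
  | .recv _ φ => fsize φ + 2

/-- `⟨α⟩φ`: prefixing `φ` with the dynamic modalities of the letters of `α`. -/
def diaWord {P A : Type} : Word A (Form P A) → Form P A → Form P A
  | [], φ => φ
  | Sum.inl a :: rest, φ => .recv a (diaWord rest φ)
  | Sum.inr χ :: rest, φ => .ann χ (diaWord rest φ)

/-- `[α]φ := ¬⟨α⟩¬φ`. -/
def boxWord {P A : Type} (α : Word A (Form P A)) (φ : Form P A) : Form P A :=
  .neg (diaWord α (.neg φ))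

/-- `⊥ := ¬⊤`. -/
def fBot {P A : Type} : Form P A := .neg .top

/-- Size `‖α‖` of a word. -/
def sizeW {P A : Type} (w : Word A (Form P A)) : ℕ :=
  (w.map (fun l => match l with | Sum.inl _ => 1 | Sum.inr φ => fsize φ)).sum

lemma fsize_pos {P A : Type} (φ : Form P A) : 1 ≤ fsize φ := by
  induction φ <;> simp [fsize] <;> omega

def degW {P A : Type} (w : Word A (Form P A)) : ℕ := ((wForms w).map deg).sum

lemma degW_append {P A : Type} (v w : Word A (Form P A)) :
    degW (v ++ w) = degW v + degW w := by
  simp [degW, wForms, List.filterMap_append]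

lemma sizeW_append {P A : Type} (v w : Word A (Form P A)) :
    sizeW (v ++ w) = sizeW v + sizeW w := by
  simp [sizeW]

lemma eq_dropLast_concat {γ : Type} {l : List γ} {x : γ} (h : l.getLast? = some x) :
    l = l.dropLast ++ [x] := by
  cases l with
  | nil => simp at h
  | cons y ys =>
    have hne : y :: ys ≠ [] := by simp
    rw [List.getLast?_eq_some_getLast hne] at h
    obtain rfl : (y :: ys).getLast hne = x := by injection h
    exact (List.dropLast_append_getLast hne).symm

lemma degW_view_le {P A : Type} [DecidableEq A] {a : A} {α β : Word A (Form P A)}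
    (h : View a α β) : degW β ≤ degW α := by
  obtain ⟨-, h1, h2⟩ := h
  have : degW β = (((wForms α).map deg).take (wcountA α a)).sum := by
    rw [degW, h1, h2, wRead, List.map_take]
  rw [this]
  calc (((wForms α).map deg).take (wcountA α a)).sum
      ≤ (((wForms α).map deg).take (wcountA α a)).sum
        + (((wForms α).map deg).drop (wcountA α a)).sum := Nat.le_add_right _ _
    _ = degW α := by rw [← List.sum_append, List.take_append_drop]; rfl

lemma degW_single_inl {P A : Type} (a : A) : degW ([Sum.inl a] : Word A (Form P A)) = 0 := by
  simp [degW, wForms, List.filterMap_cons]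

lemma degW_single_inr {P A : Type} (φ : Form P A) :
    degW ([Sum.inr φ] : Word A (Form P A)) = deg φ := by
  simp [degW, wForms]

lemma sizeW_single_inl {P A : Type} (a : A) : sizeW ([Sum.inl a] : Word A (Form P A)) = 1 := by
  simp [sizeW]

lemma sizeW_single_inr {P A : Type} (φ : Form P A) :
    sizeW ([Sum.inr φ] : Word A (Form P A)) = fsize φ := by
  simp [sizeW]

lemma lexHelp {x1 y1 x2 y2 : ℕ} (h : x1 < x2 ∨ (x1 = x2 ∧ y1 < y2)) :
    Prod.Lex (· < ·) (· < ·) (x1, y1) (x2, y2) := by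
  rcases h with h | ⟨h, h2⟩
  · exact Prod.Lex.left _ _ h
  · subst h; exact Prod.Lex.right _ h2

/-- An epistemic model. -/
structure Model (P A W : Type) where
  rel : A → W → W → Prop
  val : P → W → Prop

mutual
/-- The executability (agreement) relation `s ⋈ α`. -/
def Exec {P A W : Type} [DecidableEq A] (M : Model P A W) (s : W)
    (α : Word A (Form P A)) : Prop :=
  match h : α.getLast? with
  | none => True
  | some (Sum.inl a) => Exec M s α.dropLast ∧ wcountA α.dropLast a < wcountF α.dropLast
  | some (Sum.inr φ) => Exec M s α.dropLast ∧ Sat M s α.dropLast φ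
termination_by (degW α, 2 * sizeW α + 1)
decreasing_by
  all_goals
    have hc := eq_dropLast_concat h
    generalize hγ : α.dropLast = γ at hc ⊢
    subst hc
    refine lexHelp ?_
    simp only [degW_append, sizeW_append, degW_single_inl, degW_single_inr,
      sizeW_single_inl, sizeW_single_inr, true_and, and_true]
    first
      | omega
      | (have h1 := fsize_pos φ; omega)

/-- The satisfaction relation `s, α ⊨ φ`. -/
def Sat {P A W : Type} [DecidableEq A] (M : Model P A W) (s : W)
    (α : Word A (Form P A)) : Form P A → Prop
  | .atom p => Exec M s α ∧ M.val p s
  | .top => Exec M s α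
  | .neg φ => Exec M s α ∧ ¬ Sat M s α φ
  | .or φ ψ => Sat M s α φ ∨ Sat M s α ψ
  | .kdia a φ => Exec M s α ∧
      ∃ (t : W) (β : Word A (Form P A)) (_ : M.rel a s t) (_ : View a α β),
        Exec M t β ∧ Sat M t β φ
  | .recv a φ => wcountA α a < wcountF α ∧ Sat M s (α ++ [Sum.inl a]) φ
  | .ann φ ψ => Sat M s α φ ∧ Sat M s (α ++ [Sum.inr φ]) ψ
termination_by φ => (degW α + deg φ, 2 * sizeW α + 2 * fsize φ)
decreasing_by
  all_goals
    refine lexHelp ?_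
    simp only [deg, fsize, degW_append, sizeW_append, degW_single_inl,
      degW_single_inr, sizeW_single_inl, sizeW_single_inr, true_and, and_true]
    first
      | omega
      | (have hv := degW_view_le ‹View _ _ _›; omega)
      | (have h1 := fsize_pos φ; omega)
      | (have h1 := fsize_pos ψ; omega)
      | (have h1 := fsize_pos φ; have h2 := fsize_pos ψ; omega)
end

/-- `φ` is `ε`-valid (valid): true at every state of every epistemic model under
the empty history. -/
def EValid (P A : Type) [DecidableEq A] (φ : Form P A) : Prop :=
  ∀ (W : Type) [Nonempty W] (M : Model P A W) (s : W), Sat M s [] φ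

/-- `φ` is `∗`-valid (always valid): `[α]φ` is `ε`-valid for every word `α`. -/
def SValid (P A : Type) [DecidableEq A] (φ : Form P A) : Prop :=
  ∀ α : Word A (Form P A), EValid P A (boxWord α φ)

/-- `φ ∧ ψ := ¬(¬φ ∨ ¬ψ)`. -/
def landF {P A : Type} (φ ψ : Form P A) : Form P A := .neg (.or (.neg φ) (.neg ψ))

/-- Conjunction of a list of formulas. -/
def bigAnd {P A : Type} (l : List (Form P A)) : Form P A := l.foldr landF .top

/-- `K_a φ := ¬K̂_a ¬φ`. -/
def KformF {P A : Type} (a : A) (φ : Form P A) : Form P A := .neg (.kdia a (.neg φ))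

/-- `[a]φ := ¬⟨a⟩¬φ`. -/
def boxAg {P A : Type} (a : A) (φ : Form P A) : Form P A := .neg (.recv a (.neg φ))

/-- `empty := ⋀_{a∈A}[a]⊥ ∧ ⋀_{a,b∈A} K_a[b]⊥`. -/
noncomputable def emptyF (P A : Type) [Fintype A] : Form P A :=
  landF (bigAnd ((Finset.univ : Finset A).toList.map fun a => boxAg a fBot))
    (bigAnd ((Finset.univ : Finset A).toList.flatMap fun a =>
      (Finset.univ : Finset A).toList.map fun b => KformF a (boxAg b fBot)))

section AuxStmt14

variable {P A W : Type} [DecidableEq A] (M : Model P A W) (s : W)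

lemma exec_concat_inl (γ : Word A (Form P A)) (a : A) :
    Exec M s (γ ++ [Sum.inl a]) ↔ Exec M s γ ∧ wcountA γ a < wcountF γ := by
  rw [Exec]
  split <;> rename_i h <;> rw [List.getLast?_concat] at h <;>
    simp only [Option.some.injEq, Sum.inl.injEq, Sum.inr.injEq, reduceCtorEq] at h
  subst h
  rw [List.dropLast_concat]

lemma exec_concat_inr (γ : Word A (Form P A)) (φ : Form P A) :
    Exec M s (γ ++ [Sum.inr φ]) ↔ Exec M s γ ∧ Sat M s γ φ := by
  rw [Exec]
  split <;> rename_i h <;> rw [List.getLast?_concat] at h <;>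
    simp only [Option.some.injEq, Sum.inl.injEq, Sum.inr.injEq, reduceCtorEq] at h
  subst h
  rw [List.dropLast_concat]

lemma exec_nil : Exec M s ([] : Word A (Form P A)) := by
  rw [Exec]; simp

lemma sat_neg (γ : Word A (Form P A)) (φ : Form P A) :
    Sat M s γ (.neg φ) ↔ Exec M s γ ∧ ¬ Sat M s γ φ := by rw [Sat]

lemma sat_top (γ : Word A (Form P A)) :
    Sat M s γ (.top : Form P A) ↔ Exec M s γ := by rw [Sat]

lemma sat_or (γ : Word A (Form P A)) (φ ψ : Form P A) :
    Sat M s γ (.or φ ψ) ↔ Sat M s γ φ ∨ Sat M s γ ψ := by rw [Sat]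

lemma sat_recv (γ : Word A (Form P A)) (a : A) (φ : Form P A) :
    Sat M s γ (.recv a φ) ↔ wcountA γ a < wcountF γ ∧ Sat M s (γ ++ [Sum.inl a]) φ := by
  rw [Sat]

lemma sat_kdia (γ : Word A (Form P A)) (a : A) (φ : Form P A) :
    Sat M s γ (.kdia a φ) ↔ Exec M s γ ∧
      ∃ (t : W) (β : Word A (Form P A)) (_ : M.rel a s t) (_ : View a γ β),
        Exec M t β ∧ Sat M t β φ := by rw [Sat]

lemma sat_ann (γ : Word A (Form P A)) (φ ψ : Form P A) :
    Sat M s γ (.ann φ ψ) ↔ Sat M s γ φ ∧ Sat M s (γ ++ [Sum.inr φ]) ψ := by rw [Sat]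

lemma sat_fBot (γ : Word A (Form P A)) : ¬ Sat M s γ (fBot : Form P A) := by
  rw [fBot, sat_neg, sat_top]; tauto

lemma sat_neg_fBot (γ : Word A (Form P A)) :
    Sat M s γ (Form.neg (fBot : Form P A)) ↔ Exec M s γ := by
  rw [sat_neg]
  have := sat_fBot M s γ
  tauto

lemma sat_boxAg_fBot (γ : Word A (Form P A)) (c : A) :
    Sat M s γ (boxAg c fBot) ↔ Exec M s γ ∧ ¬ (wcountA γ c < wcountF γ) := by
  rw [boxAg, sat_neg, sat_recv, sat_neg_fBot, exec_concat_inl]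
  tauto

lemma sat_neg_boxAg_fBot (γ : Word A (Form P A)) (c : A) :
    Sat M s γ (Form.neg (boxAg c fBot)) ↔ Exec M s γ ∧ wcountA γ c < wcountF γ := by
  rw [sat_neg, sat_boxAg_fBot]
  tauto

lemma sat_land (γ : Word A (Form P A)) (φ ψ : Form P A) :
    Sat M s γ (landF φ ψ) ↔ Exec M s γ ∧ Sat M s γ φ ∧ Sat M s γ ψ := by
  rw [landF, sat_neg, sat_or, sat_neg, sat_neg]
  tauto

lemma sat_bigAnd (γ : Word A (Form P A)) (l : List (Form P A)) :
    Sat M s γ (bigAnd l) ↔ Exec M s γ ∧ ∀ φ ∈ l, Sat M s γ φ := by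
  induction l with
  | nil => simp [bigAnd, sat_top]
  | cons φ l ih =>
    rw [bigAnd, List.foldr_cons, show List.foldr landF Form.top l = bigAnd l from rfl,
      sat_land, ih]
    simp only [List.mem_cons]
    constructor
    · rintro ⟨h1, h2, h3, h4⟩
      exact ⟨h1, fun ψ hψ => hψ.elim (fun e => e ▸ h2) (h4 ψ)⟩
    · rintro ⟨h1, h2⟩
      exact ⟨h1, h2 φ (Or.inl rfl), h1, fun ψ hψ => h2 ψ (Or.inr hψ)⟩

lemma sat_K (γ : Word A (Form P A)) (a : A) (φ : Form P A) :
    Sat M s γ (KformF a φ) ↔ Exec M s γ ∧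
      ¬ ∃ (t : W) (β : Word A (Form P A)) (_ : M.rel a s t) (_ : View a γ β),
        Exec M t β ∧ Sat M t β (.neg φ) := by
  rw [KformF, sat_neg, sat_kdia]
  constructor
  · rintro ⟨hex, hn⟩
    refine ⟨hex, ?_⟩
    rintro ⟨t, β, hr, hv, he, hs⟩
    exact hn ⟨hex, t, β, hr, hv, he, hs⟩
  · rintro ⟨hex, hn⟩
    refine ⟨hex, ?_⟩
    rintro ⟨-, t, β, hr, hv, he, hs⟩
    exact hn ⟨t, β, hr, hv, he, hs⟩

lemma sat_empty [Fintype A] (γ : Word A (Form P A)) :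
    Sat M s γ (emptyF P A) ↔ Exec M s γ ∧
      (∀ c : A, wcountF γ ≤ wcountA γ c) ∧
      (∀ a b : A, ¬ ∃ (t : W) (β : Word A (Form P A)),
        M.rel a s t ∧ View a γ β ∧ Exec M t β ∧ wcountA β b < wcountF β) := by
  rw [emptyF, sat_land, sat_bigAnd, sat_bigAnd]
  constructor
  · rintro ⟨hex, ⟨-, h1⟩, -, h2⟩
    refine ⟨hex, fun c => ?_, fun a b => ?_⟩
    · have hm : (boxAg c fBot : Form P A) ∈ (Finset.univ : Finset A).toList.map fun a => boxAg a fBot :=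
        List.mem_map_of_mem (Finset.mem_toList.mpr (Finset.mem_univ c))
      have := (sat_boxAg_fBot M s γ c).mp (h1 _ hm)
      omega
    · have hm : (KformF a (boxAg b fBot) : Form P A) ∈ (Finset.univ : Finset A).toList.flatMap fun a =>
          (Finset.univ : Finset A).toList.map fun b => KformF a (boxAg b fBot) :=
        List.mem_flatMap.mpr ⟨a, Finset.mem_toList.mpr (Finset.mem_univ a),
          List.mem_map_of_mem (Finset.mem_toList.mpr (Finset.mem_univ b))⟩
      have hk := (sat_K M s γ a (boxAg b fBot)).mp (h2 _ hm)
      rintro ⟨t, β, hrel, hview, hexβ, hcnt⟩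
      exact hk.2 ⟨t, β, hrel, hview, hexβ, (sat_neg_boxAg_fBot M t β b).mpr ⟨hexβ, hcnt⟩⟩
  · rintro ⟨hex, h1, h2⟩
    refine ⟨hex, ⟨hex, ?_⟩, hex, ?_⟩
    · intro φ hφ
      obtain ⟨c, -, rfl⟩ := List.mem_map.mp hφ
      exact (sat_boxAg_fBot M s γ c).mpr ⟨hex, by have := h1 c; omega⟩
    · intro φ hφ
      obtain ⟨a, -, hφ'⟩ := List.mem_flatMap.mp hφ
      obtain ⟨b, -, rfl⟩ := List.mem_map.mp hφ'
      rw [sat_K]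
      refine ⟨hex, ?_⟩
      rintro ⟨t, β, hrel, hview, hexβ, hsat⟩
      rw [sat_neg_boxAg_fBot] at hsat
      exact h2 a b ⟨t, β, hrel, hview, hexβ, hsat.2⟩

lemma wcountA_append {A F : Type} [DecidableEq A] (v w : Word A F) (c : A) :
    wcountA (v ++ w) c = wcountA v c + wcountA w c := by
  simp [wcountA, wAgents, List.filterMap_append, List.count_append]

lemma wcountF_append {A F : Type} (v w : Word A F) :
    wcountF (v ++ w) = wcountF v + wcountF w := by
  simp [wcountF, wForms, List.filterMap_append]

lemma wcountA_inl {A F : Type} [DecidableEq A] (a c : A) :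
    wcountA ([Sum.inl a] : Word A F) c = if c = a then 1 else 0 := by
  by_cases h : c = a <;> simp [wcountA, wAgents, List.count_singleton', h] <;>
    exact fun e => h e.symm

lemma wcountA_inr {A F : Type} [DecidableEq A] (φ : F) (c : A) :
    wcountA ([Sum.inr φ] : Word A F) c = 0 := by
  simp [wcountA, wAgents, List.filterMap_cons]

lemma wcountF_inl {A F : Type} (a : A) : wcountF ([Sum.inl a] : Word A F) = 0 := by
  simp [wcountF, wForms]

lemma wcountF_inr {A F : Type} (φ : F) : wcountF ([Sum.inr φ] : Word A F) = 1 := by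
  simp [wcountF, wForms]

lemma wForms_prefix {A F : Type} {v w : Word A F} (h : v <+: w) : wForms v <+: wForms w := by
  obtain ⟨t, rfl⟩ := h
  simp only [wForms, List.filterMap_append]
  exact List.prefix_append _ _

lemma wcountA_le_of_prefix {A F : Type} [DecidableEq A] {v w : Word A F} (h : v <+: w)
    (c : A) : wcountA v c ≤ wcountA w c := by
  obtain ⟨t, rfl⟩ := h
  rw [wcountA_append]; omega

lemma wcountF_le_of_prefix {A F : Type} {v w : Word A F} (h : v <+: w) :
    wcountF v ≤ wcountF w := by
  obtain ⟨t, rfl⟩ := h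
  rw [wcountF_append]; omega

lemma exec_prefix {α γ : Word A (Form P A)} (h : Exec M s α) (hp : γ <+: α) :
    Exec M s γ := by
  induction α using List.reverseRecOn with
  | nil => rw [List.prefix_nil] at hp; subst hp; exact exec_nil M s
  | append_singleton α' x ih =>
    rcases List.prefix_concat_iff.mp hp with rfl | hp'
    · exact h
    · cases x with
      | inl a => exact ih ((exec_concat_inl M s α' a).mp h).1 hp'
      | inr φ => exact ih ((exec_concat_inr M s α' φ).mp h).1 hp'

lemma isHistory_of_exec {α : Word A (Form P A)} (h : Exec M s α) : IsHistory α := by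
  induction α using List.reverseRecOn with
  | nil =>
    intro β hβ c
    rw [List.prefix_nil] at hβ; subst hβ; exact le_refl _
  | append_singleton α' x ih =>
    cases x with
    | inl a =>
      obtain ⟨hex, hlt⟩ := (exec_concat_inl M s α' a).mp h
      have ihh := ih hex
      intro β hβ c
      rcases List.prefix_concat_iff.mp hβ with rfl | hβ'
      · rw [wcountA_append, wcountF_append, wcountA_inl, wcountF_inl]
        have := ihh α' (List.prefix_refl _) c
        have := ihh α' (List.prefix_refl _) a
        by_cases hc : c = a <;> simp [hc] <;> omega
      · exact ihh β hβ' c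
    | inr φ =>
      obtain ⟨hex, -⟩ := (exec_concat_inr M s α' φ).mp h
      have ihh := ih hex
      intro β hβ c
      rcases List.prefix_concat_iff.mp hβ with rfl | hβ'
      · rw [wcountA_append, wcountF_append, wcountA_inr, wcountF_inr]
        have := ihh α' (List.prefix_refl _) c
        omega
      · exact ihh β hβ' c

lemma isHistory_prefix {A F : Type} [DecidableEq A] {α γ : Word A F} (h : IsHistory α)
    (hp : γ <+: α) : IsHistory γ := fun β hβ c => h β (hβ.trans hp) c

lemma sat_diaWord_imp {P A : Type} [DecidableEq A] {W : Type} (M : Model P A W) (s : W)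
    (φ : Form P A) : ∀ (α β : Word A (Form P A)),
    Sat M s β (diaWord α φ) → Sat M s (β ++ α) φ := by
  intro α
  induction α with
  | nil => intro β h; simpa [diaWord] using h
  | cons x rest ih =>
    intro β h
    cases x with
    | inl a =>
      rw [diaWord, sat_recv] at h
      have := ih (β ++ [Sum.inl a]) h.2
      simpa [List.append_assoc] using this
    | inr χ =>
      rw [diaWord, sat_ann] at h
      have := ih (β ++ [Sum.inr χ]) h.2
      simpa [List.append_assoc] using this

end AuxStmt14

/-- With at least two agents, `s,ε ⊨ ⟨α⟩ empty` iff `α = ε`. -/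
theorem stmt14 {P A : Type} [DecidableEq A] [Fintype A] (hA : ∃ a b : A, a ≠ b)
    {W : Type} [Nonempty W] (M : Model P A W) (hEq : ∀ a : A, Equivalence (M.rel a))
    (s : W) (α : Word A (Form P A)) :
    Sat M s [] (diaWord α (emptyF P A)) ↔ α = [] := by
  constructor
  · intro h
    have hsat : Sat M s ([] ++ α) (emptyF P A) := sat_diaWord_imp M s _ α [] h
    rw [List.nil_append, sat_empty] at hsat
    obtain ⟨hex, hall, hK⟩ := hsat
    have hhist : IsHistory α := isHistory_of_exec M s hex
    have hceq : ∀ c : A, wcountA α c = wcountF α :=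
      fun c => le_antisymm (hhist α (List.prefix_refl _) c) (hall c)
    by_cases hF : wcountF α = 0
    · cases α with
      | nil => rfl
      | cons x rest =>
        exfalso
        cases x with
        | inl a =>
          have h1 := hceq a
          rw [show (Sum.inl a :: rest : Word A (Form P A)) = [Sum.inl a] ++ rest from rfl,
            wcountA_append, wcountA_inl, wcountF_append, wcountF_inl] at h1
          rw [if_pos rfl] at h1
          rw [show (Sum.inl a :: rest : Word A (Form P A)) = [Sum.inl a] ++ rest from rfl,
            wcountF_append, wcountF_inl] at hF
          omega
        | inr φ =>
          rw [show (Sum.inr φ :: rest : Word A (Form P A)) = [Sum.inr φ] ++ rest from rfl,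
            wcountF_append, wcountF_inr] at hF
          omega
    · exfalso
      obtain ⟨a, b, hab⟩ := hA
      -- the final contradiction builder
      have final : ∀ (u v : A) (n : ℕ), wcountA (α.take n) u = wcountF α →
          wcountA (α.take n) v < wcountF α → False := by
        intro u v n hu hv
        set β := α.take n with hβdef
        have hpre : β <+: α := List.take_prefix n α
        have hexβ : Exec M s β := exec_prefix M s hex hpre
        have hhistβ : IsHistory β := isHistory_prefix hhist hpre
        have hFβ : wcountF β = wcountF α := by
          have h1 := wcountF_le_of_prefix hpre
          have h2 := hhistβ β (List.prefix_refl _) u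
          omega
        have hforms : wForms β = wForms α := by
          apply (wForms_prefix hpre).eq_of_length
          exact hFβ
        have e1 : (wForms β).length = wcountF β := rfl
        have e2 : (wForms α).length = wcountF α := rfl
        have hreadβ : wRead β u = wForms β := by
          rw [wRead]
          exact List.take_of_length_le (by have := hceq u; omega)
        have hreadα : wRead α u = wForms α := by
          rw [wRead]
          exact List.take_of_length_le (by have := hceq u; omega)
        have hview : View u α β :=
          ⟨hhistβ, by rw [hreadβ], by rw [hreadβ, hreadα, hforms]⟩
        exact hK u v ⟨s, β, (hEq u).refl s, hview, hexβ, by omega⟩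
      have hPex : ∃ n, wcountA (α.take n) a = wcountF α ∨ wcountA (α.take n) b = wcountF α :=
        ⟨α.length, Or.inl (by rw [List.take_length]; exact hceq a)⟩
      have hN : wcountA (α.take (Nat.find hPex)) a = wcountF α ∨
          wcountA (α.take (Nat.find hPex)) b = wcountF α := Nat.find_spec hPex
      have hNle : Nat.find hPex ≤ α.length :=
        Nat.find_min' hPex (Or.inl (by rw [List.take_length]; exact hceq a))
      have hN0 : Nat.find hPex ≠ 0 := by
        intro h0
        rw [h0] at hN
        simp only [List.take_zero] at hN
        have hz : ∀ c : A, wcountA ([] : Word A (Form P A)) c = 0 := by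
          intro c; simp [wcountA, wAgents]
        rw [hz a, hz b] at hN
        omega
      obtain ⟨m, hm⟩ : ∃ m, Nat.find hPex = m + 1 := ⟨Nat.find hPex - 1, by omega⟩
      have hmlt : m < α.length := by omega
      have hprev : ¬ (wcountA (α.take m) a = wcountF α ∨ wcountA (α.take m) b = wcountF α) :=
        Nat.find_min hPex (by omega)
      have hmono : ∀ c : A, wcountA (α.take m) c ≤ wcountF α :=
        fun c => le_trans (wcountA_le_of_prefix (List.take_prefix m α) c) (le_of_eq (hceq c))
      have ha' : wcountA (α.take m) a < wcountF α :=
        lt_of_le_of_ne (hmono a) (fun e => hprev (Or.inl e))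
      have hb' : wcountA (α.take m) b < wcountF α :=
        lt_of_le_of_ne (hmono b) (fun e => hprev (Or.inr e))
      rw [hm] at hN
      have hstep : α.take (m + 1) = α.take m ++ [α[m]'hmlt] := by
        have h := List.take_concat_get hmlt
        rw [List.concat_eq_append] at h
        exact h.symm
      rcases hx : α[m]'hmlt with c | φ
      · rw [hx] at hstep
        have hA1 : wcountA (α.take (m+1)) a
            = wcountA (α.take m) a + if a = c then 1 else 0 := by
          rw [hstep, wcountA_append, wcountA_inl]
        have hB1 : wcountA (α.take (m+1)) b
            = wcountA (α.take m) b + if b = c then 1 else 0 := by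
          rw [hstep, wcountA_append, wcountA_inl]
        rcases hN with hNa | hNb
        · have hac : a = c := by
            by_contra hne
            rw [if_neg hne] at hA1
            omega
          have hbc : b ≠ c := fun e => hab (hac.trans e.symm)
          refine final a b (m+1) hNa ?_
          rw [hB1, if_neg hbc]
          omega
        · have hbc : b = c := by
            by_contra hne
            rw [if_neg hne] at hB1
            omega
          have hac : a ≠ c := fun e => hab (e.trans hbc.symm)
          refine final b a (m+1) hNb ?_
          rw [hA1, if_neg hac]
          omega
      · rw [hx] at hstep
        have hA1 : wcountA (α.take (m+1)) a = wcountA (α.take m) a := by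
          rw [hstep, wcountA_append, wcountA_inr]
          omega
        have hB1 : wcountA (α.take (m+1)) b = wcountA (α.take m) b := by
          rw [hstep, wcountA_append, wcountA_inr]
          omega
        omega
  · rintro rfl
    rw [show diaWord ([] : Word A (Form P A)) (emptyF P A) = emptyF P A from rfl, sat_empty]
    refine ⟨exec_nil M s, fun c => ?_, fun a b => ?_⟩
    · simp [wcountA, wAgents, wcountF, wForms]
    · rintro ⟨t, β, -, ⟨-, hf, hr⟩, -, hcnt⟩
      have hnil : wRead ([] : Word A (Form P A)) a = [] := by
        simp [wRead, wForms]
      rw [hnil] at hr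
      rw [hr] at hf
      have hz : wcountF β = 0 := by simp [wcountF, hf]
      omega
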